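/- Let L be a diagonalizable linear endomorphism of a finite-dimensional complex vector space V with distinct eigenvalues l₁, …, l_d and eigenprojections P₁, …, P_d, and let v ∈ V. Set I = {i : Pᵢ v ≠ 0} and W = span{Pᵢ v : i ∈ I}. Then for every nondegenerate interval T ⊆ ℝ, W is the smallest subspace of V containing {e^{Lt} v : t ∈ T}: the orbit is contained in W, and any subspace containing the orbit contains W. -/

import Mathlib

open Complex

-- derivative of t ↦ exp(l t) * c lemma
lemma aux_hasDerivAt (l c : ℂ) (t : ℝ) :
    HasDerivAt (fun s : ℝ => Complex.exp (l * s) * c) (l * Complex.exp (l * t) * c) t := by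
  have h : HasDerivAt (fun z : ℂ => Complex.exp (l * z)) (l * Complex.exp (l * t)) (t : ℂ) := by
    simpa [mul_comm, Function.comp_def] using ((Complex.hasDerivAt_exp (l * t)).comp (t:ℂ)
      ((hasDerivAt_id (t:ℂ)).const_mul l))
  exact (h.comp_ofReal).mul_const c

lemma aux_key {d : ℕ} (l : Fin d → ℂ) (hl : Function.Injective l) (c : Fin d → ℂ)
    (a b : ℝ) (hab : a < b)
    (h : ∀ t ∈ Set.Ioo a b, ∑ i, Complex.exp (l i * t) * c i = 0) :
    ∀ i, c i = 0 := by
  set t₀ : ℝ := (a + b) / 2 with ht₀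
  have ht₀mem : t₀ ∈ Set.Ioo a b := ⟨by linarith, by linarith⟩
  -- higher derivatives vanish
  have hk : ∀ k : ℕ, ∀ t ∈ Set.Ioo a b, ∑ i, (l i) ^ k * Complex.exp (l i * t) * c i = 0 := by
    intro k
    induction k with
    | zero => simpa using h
    | succ k ih =>
      intro t ht
      have hder : HasDerivAt (fun s : ℝ => ∑ i, (l i) ^ k * Complex.exp (l i * s) * c i)
          (∑ i, (l i) ^ (k+1) * Complex.exp (l i * t) * c i) t := by
        apply HasDerivAt.fun_sum
        intro i _
        have := (aux_hasDerivAt (l i) (c i) t).const_mul ((l i) ^ k)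
        convert this using 1
        · rfl
        · funext y; ring
        · ring
      have heq : (fun s : ℝ => ∑ i, (l i) ^ k * Complex.exp (l i * s) * c i) =ᶠ[nhds t]
          (fun _ => (0:ℂ)) := by
        filter_upwards [isOpen_Ioo.mem_nhds ht] with s hs using ih s hs
      have h0 : HasDerivAt (fun s : ℝ => ∑ i, (l i) ^ k * Complex.exp (l i * s) * c i) 0 t :=
        (hasDerivAt_const t (0:ℂ)).congr_of_eventuallyEq heq
      exact (hder.unique h0)
  -- Vandermonde
  have hmul : (Matrix.vandermonde l).transpose.mulVec (fun i => Complex.exp (l i * t₀) * c i) = 0 := by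
    funext k
    simpa [Matrix.mulVec, Matrix.vandermonde, dotProduct, mul_assoc] using hk k t₀ ht₀mem
  have hdet : (Matrix.vandermonde l).transpose.det ≠ 0 := by
    rw [Matrix.det_transpose, Matrix.det_vandermonde]
    refine Finset.prod_ne_zero_iff.mpr fun i _ => Finset.prod_ne_zero_iff.mpr fun j hj => ?_
    exact sub_ne_zero.mpr fun e => ((Finset.mem_Ioi.mp hj).ne' (hl e)).elim
  have := Matrix.eq_zero_of_mulVec_eq_zero hdet hmul
  intro i
  have hi := congrFun this i
  simp only [Pi.zero_apply, mul_eq_zero] at hi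
  exact hi.resolve_left (Complex.exp_ne_zero _)

theorem stmt_16 {V : Type*} [AddCommGroup V] [Module ℂ V] [FiniteDimensional ℂ V]
    {d : ℕ} (l : Fin d → ℂ) (hl : Function.Injective l)
    (P : Fin d → (V →ₗ[ℂ] V))
    (hsum : ∑ i, P i = LinearMap.id)
    (horth : ∀ i j, P i ∘ₗ P j = if i = j then P i else 0)
    (v : V) (W : Submodule ℂ V)
    (hW : W = Submodule.span ℂ {x | ∃ i, P i v ≠ 0 ∧ x = P i v})
    (T : Set ℝ) (hT : T.OrdConnected) (a b : ℝ) (ha : a ∈ T) (hb : b ∈ T) (hab : a < b) :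
    (∀ t ∈ T, (∑ i, Complex.exp (l i * t) • P i) v ∈ W) ∧
    (∀ W' : Submodule ℂ V, (∀ t ∈ T, (∑ i, Complex.exp (l i * t) • P i) v ∈ W') → W ≤ W') := by
  have happ : ∀ t : ℝ, (∑ i, Complex.exp (l i * t) • P i) v
      = ∑ i, Complex.exp (l i * t) • (P i v) := by
    intro t
    simp [LinearMap.sum_apply]
  constructor
  · intro t _
    rw [happ]
    refine Submodule.sum_mem _ fun i _ => Submodule.smul_mem _ _ ?_
    by_cases hi : P i v = 0
    · simp [hi]
    · exact hW ▸ Submodule.subset_span ⟨i, hi, rfl⟩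
  · intro W' hW'
    have hIcc : Set.Icc a b ⊆ T := hT.out ha hb
    have hPiv : ∀ i, P i v ∈ W' := by
      intro i
      have hq : (W'.mkQ (P i v)) = 0 := by
        rw [← Module.forall_dual_apply_eq_zero_iff ℂ]
        intro φ
        have := aux_key l hl (fun i => φ (W'.mkQ (P i v))) a b hab ?_
        · exact this i
        · intro t ht
          have hmem := hW' t (hIcc (Set.Ioo_subset_Icc_self ht))
          have : W'.mkQ ((∑ i, Complex.exp (l i * t) • P i) v) = 0 :=
            (Submodule.Quotient.mk_eq_zero W').mpr hmem
          rw [happ] at this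
          calc ∑ i, Complex.exp (l i * t) * φ (W'.mkQ (P i v))
              = φ (W'.mkQ (∑ i, Complex.exp (l i * t) • (P i v))) := by
                simp [map_sum, map_smul, smul_eq_mul]
            _ = 0 := by rw [this, map_zero]
      rwa [← Submodule.Quotient.mk_eq_zero W', ← Submodule.mkQ_apply]
    rw [hW, Submodule.span_le]
    rintro x ⟨i, -, rfl⟩
    exact hPiv i
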